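/- There exists a constant C > 0 such that for all c, c' ∈ ℝ³, the Lebesgue integral over the region {x ∈ ℝ³ : |x − c| ≥ 2 and |x − c'| ≥ 2} of the function x ↦ |x − c|⁻²·|x − c'|⁻² is at most C/(1 + |c − c'|). -/

import Mathlib

open MeasureTheory Set Filter Topology
open scoped ENNReal NNReal

local notation "E3" => EuclideanSpace ℝ (Fin 3)

/-- Polar-coordinates formula for the Lebesgue integral of a radial function. -/
lemma lintegral_fun_norm_addHaar' {E : Type*} [NormedAddCommGroup E] [NormedSpace ℝ E]
    [MeasurableSpace E] [BorelSpace E] [FiniteDimensional ℝ E] [Nontrivial E]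
    (μ : Measure E) [μ.IsAddHaarMeasure] (g : ℝ → ℝ≥0∞) (hg : Measurable g) :
    ∫⁻ x, g ‖x‖ ∂μ
      = μ.toSphere univ *
        ∫⁻ r in Ioi (0:ℝ), ENNReal.ofReal (r ^ (Module.finrank ℝ E - 1)) * g r := by
  have h1 : ∫⁻ x, g ‖x‖ ∂μ = ∫⁻ x : ({0}ᶜ : Set E), g ‖(x : E)‖ ∂(μ.comap (↑)) := by
    rw [lintegral_subtype_comap (measurableSet_singleton _).compl fun x ↦ g ‖x‖,
      restrict_compl_singleton]
  have h2 : ∫⁻ x : ({0}ᶜ : Set E), g ‖(x : E)‖ ∂(μ.comap (↑))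
      = ∫⁻ p : Metric.sphere (0:E) 1 × Ioi (0:ℝ), g p.2
          ∂(μ.toSphere.prod (.volumeIoiPow (Module.finrank ℝ E - 1))) :=
    by simpa only [homeomorphUnitSphereProd_apply_snd_coe] using
      (μ.measurePreserving_homeomorphUnitSphereProd.lintegral_comp_emb
        (Homeomorph.measurableEmbedding _) (fun p ↦ g p.2))
  have hgm : Measurable fun p : Metric.sphere (0:E) 1 × Ioi (0:ℝ) ↦ g p.2 :=
    hg.comp (measurable_subtype_coe.comp measurable_snd)
  have h3 : ∫⁻ p : Metric.sphere (0:E) 1 × Ioi (0:ℝ), g p.2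
        ∂(μ.toSphere.prod (.volumeIoiPow (Module.finrank ℝ E - 1)))
      = μ.toSphere univ * ∫⁻ r : Ioi (0:ℝ), g r ∂(.volumeIoiPow (Module.finrank ℝ E - 1)) := by
    rw [lintegral_prod _ hgm.aemeasurable]
    simp [lintegral_const, mul_comm]
  have h4 : ∫⁻ r : Ioi (0:ℝ), g r ∂(Measure.volumeIoiPow (Module.finrank ℝ E - 1))
      = ∫⁻ r in Ioi (0:ℝ), ENNReal.ofReal (r ^ (Module.finrank ℝ E - 1)) * g r := by
    rw [Measure.volumeIoiPow,
      lintegral_withDensity_eq_lintegral_mul _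
        (by fun_prop : Measurable fun r : Ioi (0:ℝ) ↦ ENNReal.ofReal ((r : ℝ) ^ (Module.finrank ℝ E - 1)))
        (show Measurable fun r : Ioi (0:ℝ) ↦ g ↑r from hg.comp measurable_subtype_coe),
      ]
    exact lintegral_subtype_comap measurableSet_Ioi
      (fun r : ℝ ↦ ENNReal.ofReal (r ^ (Module.finrank ℝ E - 1)) * g r)
  rw [h1, h2, h3, h4]

/-- The 1D improper integral `∫_2^∞ (r+a)⁻² dr = (2+a)⁻¹` for `a ≥ 0`. -/
lemma integral_shifted_inv_sq {a : ℝ} (ha : 0 ≤ a) :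
    ∫ r in Ioi (2:ℝ), ((r + a) ^ 2)⁻¹ = (2 + a)⁻¹ := by
  have hderiv : ∀ x ∈ Ici (2:ℝ), HasDerivAt (fun r : ℝ ↦ -(r + a)⁻¹) (((x + a) ^ 2)⁻¹) x := by
    intro x hx
    have hx0 : x + a ≠ 0 := by simp only [mem_Ici] at hx; nlinarith
    have h := (((hasDerivAt_id x).add_const a).inv hx0).neg
    refine h.congr_deriv ?_
    simp only [id]; ring
  have hpos : ∀ x ∈ Ioi (2:ℝ), 0 ≤ ((x + a) ^ 2)⁻¹ := fun x _ ↦ by positivity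
  have htend : Tendsto (fun r : ℝ ↦ -(r + a)⁻¹) atTop (𝓝 0) := by
    rw [show (0:ℝ) = -0 by ring]
    exact (((tendsto_atTop_add_const_right atTop a tendsto_id).inv_tendsto_atTop)).neg
  have := integral_Ioi_of_hasDerivAt_of_nonneg' hderiv hpos htend
  simpa using this

lemma integrableOn_shifted_inv_sq {a : ℝ} (ha : 0 ≤ a) :
    IntegrableOn (fun r : ℝ ↦ ((r + a) ^ 2)⁻¹) (Ioi (2:ℝ)) := by
  have hderiv : ∀ x ∈ Ici (2:ℝ), HasDerivAt (fun r : ℝ ↦ -(r + a)⁻¹) (((x + a) ^ 2)⁻¹) x := by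
    intro x hx
    have hx0 : x + a ≠ 0 := by simp only [mem_Ici] at hx; nlinarith
    have h := (((hasDerivAt_id x).add_const a).inv hx0).neg
    refine h.congr_deriv ?_
    simp only [id]; ring
  have hpos : ∀ x ∈ Ioi (2:ℝ), 0 ≤ ((x + a) ^ 2)⁻¹ := fun x _ ↦ by positivity
  have htend : Tendsto (fun r : ℝ ↦ -(r + a)⁻¹) atTop (𝓝 0) := by
    rw [show (0:ℝ) = -0 by ring]
    exact (((tendsto_atTop_add_const_right atTop a tendsto_id).inv_tendsto_atTop)).neg
  exact integrableOn_Ioi_deriv_of_nonneg' hderiv hpos htend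

/-- Key radial estimate in 3D. -/
lemma key_radial {a : ℝ} (ha : 0 ≤ a) :
    ∫⁻ y in {y : E3 | 2 ≤ ‖y‖}, ENNReal.ofReal ((‖y‖ ^ 2)⁻¹ * ((‖y‖ + a) ^ 2)⁻¹)
      = (volume : Measure E3).toSphere univ * ENNReal.ofReal ((2 + a)⁻¹) := by
  set g : ℝ → ℝ≥0∞ :=
    fun r ↦ indicator (Ici (2:ℝ)) (fun t ↦ ENNReal.ofReal ((t ^ 2)⁻¹ * ((t + a) ^ 2)⁻¹)) r with hgdef
  have hg : Measurable g := by
    apply Measurable.indicator _ measurableSet_Ici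
    fun_prop
  have hset : {y : E3 | 2 ≤ ‖y‖} = (fun y : E3 ↦ ‖y‖) ⁻¹' (Ici 2) := rfl
  have hms : MeasurableSet {y : E3 | 2 ≤ ‖y‖} := measurableSet_le measurable_const measurable_norm
  have hLHS : ∫⁻ y in {y : E3 | 2 ≤ ‖y‖}, ENNReal.ofReal ((‖y‖ ^ 2)⁻¹ * ((‖y‖ + a) ^ 2)⁻¹)
      = ∫⁻ y : E3, g ‖y‖ := by
    rw [← lintegral_indicator hms]
    apply lintegral_congr
    intro y
    by_cases h : 2 ≤ ‖y‖ <;> simp [hgdef, indicator, h]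
  rw [hLHS, lintegral_fun_norm_addHaar' volume g hg]
  congr 1
  have hrank : Module.finrank ℝ E3 - 1 = 2 := by
    rw [finrank_euclideanSpace_fin]
  rw [hrank]
  have hind : ∀ r : ℝ, ENNReal.ofReal (r ^ 2) * g r
      = indicator (Ici (2:ℝ)) (fun t ↦ ENNReal.ofReal (((t + a) ^ 2)⁻¹)) r := by
    intro r
    by_cases h : 2 ≤ r
    · have hr0 : r ≠ 0 := by nlinarith
      simp only [hgdef, indicator_of_mem (mem_Ici.2 h)]
      rw [← ENNReal.ofReal_mul (by positivity)]
      congr 1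
      field_simp
    · simp [hgdef, indicator_of_notMem (fun hh ↦ h (mem_Ici.1 hh))]
  calc ∫⁻ r in Ioi (0:ℝ), ENNReal.ofReal (r ^ 2) * g r
      = ∫⁻ r in Ioi (0:ℝ), indicator (Ici (2:ℝ)) (fun t ↦ ENNReal.ofReal (((t + a) ^ 2)⁻¹)) r := by
        exact lintegral_congr fun r ↦ hind r
    _ = ∫⁻ r in Ici (2:ℝ), ENNReal.ofReal (((r + a) ^ 2)⁻¹) := by
        rw [lintegral_indicator measurableSet_Ici, Measure.restrict_restrict measurableSet_Ici]
        rw [show Ici (2:ℝ) ∩ Ioi 0 = Ici 2 from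
          inter_eq_left.2 fun x hx ↦ lt_of_lt_of_le two_pos (mem_Ici.1 hx)]
    _ = ∫⁻ r in Ioi (2:ℝ), ENNReal.ofReal (((r + a) ^ 2)⁻¹) := by
        exact (setLIntegral_congr Ioi_ae_eq_Ici).symm
    _ = ENNReal.ofReal ((2 + a)⁻¹) := by
        rw [← ofReal_integral_eq_lintegral_ofReal (integrableOn_shifted_inv_sq ha)
          (Eventually.of_forall fun x ↦ by positivity), integral_shifted_inv_sq ha]

/-- Pointwise bound: if `2 ≤ r ≤ s`, `2 ≤ s`, and `d ≤ r + s`, then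
`r⁻² s⁻² ≤ 16 r⁻² (r + d + 2)⁻²`. -/
lemma pointwise_bound {r s d : ℝ} (hr : 2 ≤ r) (hs : 2 ≤ s) (hrs : r ≤ s) (hd : d ≤ r + s)
    (hd0 : 0 ≤ d) :
    (r ^ 2)⁻¹ * (s ^ 2)⁻¹ ≤ 16 * ((r ^ 2)⁻¹ * ((r + (d + 2)) ^ 2)⁻¹) := by
  have hs4 : r + (d + 2) ≤ 4 * s := by nlinarith
  have hrpos : (0:ℝ) < r := by linarith
  have hspos : (0:ℝ) < s := by linarith
  have hq : (r + (d + 2)) ^ 2 ≤ 16 * s ^ 2 := by nlinarith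
  have h1 : (s ^ 2)⁻¹ ≤ 16 * ((r + (d + 2)) ^ 2)⁻¹ := by
    rw [← one_div, ← one_div, mul_one_div, div_le_div_iff₀ (by positivity) (by positivity)]
    nlinarith
  calc (r ^ 2)⁻¹ * (s ^ 2)⁻¹ ≤ (r ^ 2)⁻¹ * (16 * ((r + (d + 2)) ^ 2)⁻¹) :=
        mul_le_mul_of_nonneg_left h1 (by positivity)
    _ = 16 * ((r ^ 2)⁻¹ * ((r + (d + 2)) ^ 2)⁻¹) := by ring

/-- One half of the interaction integral. -/
lemma half_bound (c c' : E3) :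
    ∫⁻ x in {x : E3 | 2 ≤ ‖x - c‖ ∧ 2 ≤ ‖x - c'‖ ∧ ‖x - c‖ ≤ ‖x - c'‖},
        ENNReal.ofReal ((‖x - c‖ ^ 2)⁻¹ * (‖x - c'‖ ^ 2)⁻¹) ∂volume
      ≤ ENNReal.ofReal 16 * ((volume : Measure E3).toSphere univ
          * ENNReal.ofReal ((4 + ‖c - c'‖)⁻¹)) := by
  set d : ℝ := ‖c - c'‖ with hddef
  have hd0 : 0 ≤ d := norm_nonneg _
  set G : E3 → ℝ≥0∞ :=
    fun x ↦ ENNReal.ofReal (16 * ((‖x - c‖ ^ 2)⁻¹ * ((‖x - c‖ + (d + 2)) ^ 2)⁻¹)) with hGdef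
  have hGm : Measurable G := by
    apply ENNReal.measurable_ofReal.comp
    fun_prop
  have step1 : ∫⁻ x in {x : E3 | 2 ≤ ‖x - c‖ ∧ 2 ≤ ‖x - c'‖ ∧ ‖x - c‖ ≤ ‖x - c'‖},
      ENNReal.ofReal ((‖x - c‖ ^ 2)⁻¹ * (‖x - c'‖ ^ 2)⁻¹) ∂volume
      ≤ ∫⁻ x in {x : E3 | 2 ≤ ‖x - c‖ ∧ 2 ≤ ‖x - c'‖ ∧ ‖x - c‖ ≤ ‖x - c'‖}, G x ∂volume := by
    apply setLIntegral_mono hGm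
    intro x hx
    obtain ⟨h1, h2, h3⟩ := hx
    apply ENNReal.ofReal_le_ofReal
    apply pointwise_bound h1 h2 h3 _ hd0
    calc d = ‖(x - c') - (x - c)‖ := by rw [hddef, show c - c' = (x - c') - (x - c) by abel]
      _ ≤ ‖x - c'‖ + ‖x - c‖ := norm_sub_le _ _
      _ = ‖x - c‖ + ‖x - c'‖ := by ring
  have step2 : ∫⁻ x in {x : E3 | 2 ≤ ‖x - c‖ ∧ 2 ≤ ‖x - c'‖ ∧ ‖x - c‖ ≤ ‖x - c'‖},
      G x ∂volume ≤ ∫⁻ x in {x : E3 | 2 ≤ ‖x - c‖}, G x ∂volume :=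
    lintegral_mono_set fun x hx ↦ hx.1
  have step3 : ∫⁻ x in {x : E3 | 2 ≤ ‖x - c‖}, G x ∂volume
      = ∫⁻ y in {y : E3 | 2 ≤ ‖y‖},
          ENNReal.ofReal (16 * ((‖y‖ ^ 2)⁻¹ * ((‖y‖ + (d + 2)) ^ 2)⁻¹)) ∂volume := by
    have hmp : MeasurePreserving (fun x : E3 ↦ x - c) volume volume :=
      measurePreserving_sub_right volume c
    have := hmp.setLIntegral_comp_preimage_emb
      (MeasurableEquiv.subRight c).measurableEmbedding
      (fun y ↦ ENNReal.ofReal (16 * ((‖y‖ ^ 2)⁻¹ * ((‖y‖ + (d + 2)) ^ 2)⁻¹)))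
      {y : E3 | 2 ≤ ‖y‖}
    exact this
  have step4 : ∫⁻ y in {y : E3 | 2 ≤ ‖y‖},
      ENNReal.ofReal (16 * ((‖y‖ ^ 2)⁻¹ * ((‖y‖ + (d + 2)) ^ 2)⁻¹)) ∂volume
      = ENNReal.ofReal 16 * ((volume : Measure E3).toSphere univ
          * ENNReal.ofReal ((4 + d)⁻¹)) := by
    have heq : ∀ y : E3, ENNReal.ofReal (16 * ((‖y‖ ^ 2)⁻¹ * ((‖y‖ + (d + 2)) ^ 2)⁻¹))
        = ENNReal.ofReal 16 * ENNReal.ofReal ((‖y‖ ^ 2)⁻¹ * ((‖y‖ + (d + 2)) ^ 2)⁻¹) := by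
      intro y
      rw [ENNReal.ofReal_mul (by norm_num)]
    simp_rw [heq]
    rw [lintegral_const_mul' _ _ ENNReal.ofReal_ne_top,
      key_radial (by linarith : (0:ℝ) ≤ d + 2)]
    congr 3
    ring
  calc _ ≤ _ := step1
    _ ≤ _ := step2
    _ = _ := step3
    _ = _ := step4

/-- There is `C > 0` such that for all `c, c' ∈ ℝ³`,
`∫_{‖x−c‖≥2, ‖x−c'‖≥2} ‖x−c‖⁻² ‖x−c'‖⁻² dx ≤ C/(1 + ‖c−c'‖)`. -/
theorem interaction_integral_bound :
    ∃ C > (0 : ℝ), ∀ c c' : EuclideanSpace ℝ (Fin 3),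
      ∫⁻ x in {x : EuclideanSpace ℝ (Fin 3) | 2 ≤ ‖x - c‖ ∧ 2 ≤ ‖x - c'‖},
          ENNReal.ofReal ((‖x - c‖ ^ 2)⁻¹ * (‖x - c'‖ ^ 2)⁻¹) ∂volume
        ≤ ENNReal.ofReal (C / (1 + ‖c - c'‖)) := by
  set S : ℝ≥0∞ := (volume : Measure E3).toSphere univ with hSdef
  have hSfin : S ≠ ⊤ := measure_ne_top _ _
  set Sr : ℝ := S.toReal with hSrdef
  have hSr0 : 0 ≤ Sr := ENNReal.toReal_nonneg
  refine ⟨32 * Sr + 1, by positivity, fun c c' ↦ ?_⟩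
  set d : ℝ := ‖c - c'‖ with hddef
  have hd0 : 0 ≤ d := norm_nonneg _
  set f : E3 → ℝ≥0∞ := fun x ↦ ENNReal.ofReal ((‖x - c‖ ^ 2)⁻¹ * (‖x - c'‖ ^ 2)⁻¹) with hfdef
  have hsub : {x : E3 | 2 ≤ ‖x - c‖ ∧ 2 ≤ ‖x - c'‖}
      ⊆ {x : E3 | 2 ≤ ‖x - c‖ ∧ 2 ≤ ‖x - c'‖ ∧ ‖x - c‖ ≤ ‖x - c'‖}
        ∪ {x : E3 | 2 ≤ ‖x - c'‖ ∧ 2 ≤ ‖x - c‖ ∧ ‖x - c'‖ ≤ ‖x - c‖} := by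
    intro x hx
    rcases le_total ‖x - c‖ ‖x - c'‖ with h | h
    · exact Or.inl ⟨hx.1, hx.2, h⟩
    · exact Or.inr ⟨hx.2, hx.1, h⟩
  have hbound : ENNReal.ofReal 16 * (S * ENNReal.ofReal ((4 + d)⁻¹))
      = ENNReal.ofReal (16 * Sr * (4 + d)⁻¹) := by
    rw [← ENNReal.ofReal_toReal hSfin, ← hSrdef,
      ← ENNReal.ofReal_mul (by positivity : (0:ℝ) ≤ Sr),
      ← ENNReal.ofReal_mul (by norm_num : (0:ℝ) ≤ 16)]
    ring_nf
  calc ∫⁻ x in {x : E3 | 2 ≤ ‖x - c‖ ∧ 2 ≤ ‖x - c'‖}, f x ∂volume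
      ≤ ∫⁻ x in {x : E3 | 2 ≤ ‖x - c‖ ∧ 2 ≤ ‖x - c'‖ ∧ ‖x - c‖ ≤ ‖x - c'‖}
          ∪ {x : E3 | 2 ≤ ‖x - c'‖ ∧ 2 ≤ ‖x - c‖ ∧ ‖x - c'‖ ≤ ‖x - c‖}, f x ∂volume :=
        lintegral_mono_set hsub
    _ ≤ (∫⁻ x in {x : E3 | 2 ≤ ‖x - c‖ ∧ 2 ≤ ‖x - c'‖ ∧ ‖x - c‖ ≤ ‖x - c'‖}, f x ∂volume)
        + ∫⁻ x in {x : E3 | 2 ≤ ‖x - c'‖ ∧ 2 ≤ ‖x - c‖ ∧ ‖x - c'‖ ≤ ‖x - c‖}, f x ∂volume :=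
        lintegral_union_le _ _ _
    _ ≤ ENNReal.ofReal (16 * Sr * (4 + d)⁻¹) + ENNReal.ofReal (16 * Sr * (4 + d)⁻¹) := by
        apply add_le_add
        · rw [← hbound]
          exact half_bound c c'
        · have h2 := half_bound c' c
          have hcomm : ∀ x : E3, ENNReal.ofReal ((‖x - c'‖ ^ 2)⁻¹ * (‖x - c‖ ^ 2)⁻¹)
              = f x := fun x ↦ by rw [hfdef]; ring_nf
          rw [← hbound, hddef, norm_sub_rev]
          calc ∫⁻ x in {x : E3 | 2 ≤ ‖x - c'‖ ∧ 2 ≤ ‖x - c‖ ∧ ‖x - c'‖ ≤ ‖x - c‖}, f x ∂volume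
              = ∫⁻ x in {x : E3 | 2 ≤ ‖x - c'‖ ∧ 2 ≤ ‖x - c‖ ∧ ‖x - c'‖ ≤ ‖x - c‖},
                  ENNReal.ofReal ((‖x - c'‖ ^ 2)⁻¹ * (‖x - c‖ ^ 2)⁻¹) ∂volume := by
                apply lintegral_congr fun x ↦ (hcomm x).symm
            _ ≤ _ := h2
    _ = ENNReal.ofReal (32 * Sr * (4 + d)⁻¹) := by
        rw [← ENNReal.ofReal_add (by positivity) (by positivity)]
        congr 1
        ring
    _ ≤ ENNReal.ofReal ((32 * Sr + 1) / (1 + d)) := by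
        apply ENNReal.ofReal_le_ofReal
        rw [div_eq_mul_inv]
        have h1 : (4 + d)⁻¹ ≤ (1 + d)⁻¹ := by
          apply inv_anti₀ (by linarith) (by linarith)
        calc 32 * Sr * (4 + d)⁻¹ ≤ 32 * Sr * (1 + d)⁻¹ :=
              mul_le_mul_of_nonneg_left h1 (by positivity)
          _ ≤ (32 * Sr + 1) * (1 + d)⁻¹ := by
              apply mul_le_mul_of_nonneg_right (by linarith) (by positivity)
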